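/- arXiv:1601.02037 — 2 statements merged into one kernel-verified Lean document; each statement's English description precedes it below -/
import Mathlib

section
/- Let X be a real Banach space, Y a closed subspace of X, and π : X → X/Y the quotient map. Let κ be an infinite cardinal such that the quotient Banach space X/Y has a dense subset of cardinality at most κ. Then there exist closed subspaces Y• and X• of X with Y• ⊆ Y, Y• ⊆ X•, such that: Y• has a dense subset of cardinality at most κ, π maps X• onto all of X/Y, and X• ∩ Y = Y• (equivalently, the kernel of the restriction of π to X• equals Y•, so that X•/Y• is isomorphic to X/Y). -/
noncomputable section

open Cardinal Set

/-- In a pseudometric space, any subset of (the closure of) a set of cardinality at most `κ`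
(with `κ` infinite) has a dense subset of cardinality at most `κ`. -/
lemma aux_dense_subset {E : Type} [PseudoMetricSpace E] {κ : Cardinal}
    (hκ : Cardinal.aleph0 ≤ κ) (s t : Set E) (hts : t ⊆ closure s)
    (hs : Cardinal.mk s ≤ κ) :
    ∃ u : Set E, u ⊆ t ∧ Cardinal.mk u ≤ κ ∧ t ⊆ closure u := by
  classical
  set P : s × ℕ → Prop := fun p => ∃ y, y ∈ t ∧ dist y (p.1 : E) < 1 / ((p.2 : ℝ) + 1) with hP
  set u : Set E := Set.range fun p : {p : s × ℕ // P p} => p.2.choose with hu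
  have hut : u ⊆ t := by rintro y ⟨p, rfl⟩; exact p.2.choose_spec.1
  refine ⟨u, hut, ?_, ?_⟩
  · calc Cardinal.mk u ≤ Cardinal.mk {p : s × ℕ // P p} := Cardinal.mk_range_le
      _ ≤ Cardinal.mk (s × ℕ) := Cardinal.mk_subtype_le _
      _ = Cardinal.mk s * Cardinal.mk ℕ := by
          rw [Cardinal.mk_prod, Cardinal.lift_id, Cardinal.lift_id]
      _ ≤ κ * κ := by
          rw [Cardinal.mk_nat]
          exact mul_le_mul' hs hκ
      _ = κ := Cardinal.mul_eq_self hκ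
  · intro y hy
    rw [Metric.mem_closure_iff]
    intro ε hε
    obtain ⟨n, hn⟩ := exists_nat_one_div_lt (show (0 : ℝ) < ε / 2 by linarith)
    have hy' := hts hy
    rw [Metric.mem_closure_iff] at hy'
    obtain ⟨x, hx, hxy⟩ := hy' (1 / ((n : ℝ) + 1)) (by positivity)
    have hPp : P ⟨⟨x, hx⟩, n⟩ := ⟨y, hy, hxy⟩
    refine ⟨hPp.choose, ⟨⟨⟨⟨x, hx⟩, n⟩, hPp⟩, rfl⟩, ?_⟩
    have h1 := hPp.choose_spec.2
    have h2 : dist y hPp.choose ≤ dist y x + dist hPp.choose x := by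
      rw [dist_comm hPp.choose x]; exact dist_triangle _ _ _
    have h3 : (1 : ℝ) / ((n : ℝ) + 1) < ε / 2 := hn
    linarith

/-- The additive subgroup generated by a set has cardinality at most `max #s ℵ₀`. -/
lemma aux_mk_closure_le {M : Type} [AddCommGroup M] (s : Set M) :
    Cardinal.mk (AddSubgroup.closure s) ≤ max (Cardinal.mk s) Cardinal.aleph0 := by
  have hset : ((AddSubgroup.closure s : AddSubgroup M) : Set M)
      = ((Submodule.span ℤ s : Submodule ℤ M) : Set M) := by
    rw [← Submodule.span_int_eq_addSubgroupClosure]; rfl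
  have hcongr : Cardinal.mk (AddSubgroup.closure s)
      = Cardinal.mk (Submodule.span ℤ s) := Cardinal.mk_congr (Equiv.setCongr hset)
  rw [hcongr]
  have hsurj := LinearMap.surjective_rangeRestrict (Finsupp.linearCombination ℤ ((↑) : s → M))
  have h2 : Cardinal.mk (LinearMap.range (Finsupp.linearCombination ℤ ((↑) : s → M)))
      ≤ Cardinal.mk (s →₀ ℤ) := Cardinal.mk_le_of_surjective hsurj
  rw [Finsupp.range_linearCombination, Subtype.range_coe] at h2
  refine h2.trans ?_
  cases finite_or_infinite s with
  | inl h =>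
      exact (Cardinal.mk_le_aleph0).trans (le_max_right _ _)
  | inr h =>
      rw [Cardinal.mk_finsupp_lift_of_infinite, Cardinal.lift_id, Cardinal.lift_id,
        Cardinal.mk_int]

/-- The real span of a set `S` is contained in the closure of the additive subgroup generated
by rational multiples of elements of `S`. -/
lemma aux_span_sub_closure {X : Type} [NormedAddCommGroup X] [NormedSpace ℝ X] (S : Set X) :
    ((Submodule.span ℝ S : Submodule ℝ X) : Set X) ⊆
      closure ((AddSubgroup.closure
        (Set.range fun p : ℚ × S => (p.1 : ℝ) • (p.2 : X)) : AddSubgroup X) : Set X) := by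
  set QS : Set X := Set.range fun p : ℚ × S => (p.1 : ℝ) • (p.2 : X) with hQS
  set G : AddSubgroup X := AddSubgroup.closure QS with hG
  have hGsmul : ∀ (q : ℚ) (z : X), z ∈ G → (q : ℝ) • z ∈ G := by
    intro q z hz
    refine AddSubgroup.closure_induction ?_ ?_ ?_ ?_ hz
    · rintro x ⟨⟨q', y⟩, rfl⟩
      refine AddSubgroup.subset_closure ⟨⟨q * q', y⟩, ?_⟩
      show ((q * q' : ℚ) : ℝ) • (y : X) = (q : ℝ) • ((q' : ℝ) • (y : X))
      rw [smul_smul]; push_cast; ring_nf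
    · simpa using G.zero_mem
    · intro a b _ _ ha hb; rw [smul_add]; exact G.add_mem ha hb
    · intro a _ ha; rw [smul_neg]; exact G.neg_mem ha
  have hGsmul' : ∀ (q : ℚ) (z : X), z ∈ closure (G : Set X) →
      (q : ℝ) • z ∈ closure (G : Set X) := by
    intro q z hz
    have cont : Continuous fun w : X => (q : ℝ) • w := continuous_const_smul _
    have h2 : (q : ℝ) • z ∈ closure ((fun w : X => (q : ℝ) • w) '' (G : Set X)) :=
      image_closure_subset_closure_image (s := (G : Set X)) cont ⟨z, hz, rfl⟩
    have h3 : ((fun w : X => (q : ℝ) • w) '' (G : Set X)) ⊆ (G : Set X) := by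
      rintro _ ⟨w, hw, rfl⟩; exact hGsmul q w hw
    exact closure_mono h3 h2
  intro x hx
  refine Submodule.span_induction ?_ ?_ ?_ ?_ hx
  · intro y hy
    refine subset_closure (AddSubgroup.subset_closure ⟨⟨1, ⟨y, hy⟩⟩, ?_⟩)
    show ((1 : ℚ) : ℝ) • y = y
    norm_num
  · exact subset_closure G.zero_mem
  · intro a b _ _ ha hb
    have : a + b ∈ G.topologicalClosure := add_mem (by exact ha) (by exact hb)
    exact this
  · intro r y _ hy
    have hr : r ∈ closure (Set.range ((↑) : ℚ → ℝ)) := Rat.denseRange_cast (𝕜 := ℝ) r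
    have cont : Continuous fun t : ℝ => t • y := continuous_id.smul continuous_const
    have h2 : r • y ∈ closure ((fun t : ℝ => t • y) '' (Set.range ((↑) : ℚ → ℝ))) :=
      image_closure_subset_closure_image (s := Set.range ((↑) : ℚ → ℝ)) cont ⟨r, hr, rfl⟩
    have h3 : ((fun t : ℝ => t • y) '' (Set.range ((↑) : ℚ → ℝ))) ⊆ closure (G : Set X) := by
      rintro _ ⟨_, ⟨q, rfl⟩, rfl⟩; exact hGsmul' q y hy
    have h4 := closure_mono h3 h2
    rwa [closure_closure] at h4

/-- Given a Banach space `X`, a closed subspace `Y`, and an infinite cardinal `κ` such that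
`X/Y` has a dense subset of cardinality at most `κ`, there are closed subspaces
`Y• ⊆ Y` and `X• ⊆ X` with `Y• ⊆ X•` such that `Y•` has a dense subset of cardinality at
most `κ`, the quotient map `π : X → X/Y` maps `X•` onto `X/Y`, and `X• ∩ Y = Y•`
(i.e. the kernel of the restriction of `π` to `X•` is `Y•`, so `X•/Y• = X/Y`). -/
theorem statement7
    (X : Type) [NormedAddCommGroup X] [NormedSpace ℝ X] [CompleteSpace X]
    (Y : Submodule ℝ X) (hYc : IsClosed (Y : Set X))
    (κ : Cardinal) (hκ : Cardinal.aleph0 ≤ κ)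
    (hdens : ∃ s : Set (X ⧸ Y), Dense s ∧ Cardinal.mk s ≤ κ) :
    ∃ Yb Xb : Submodule ℝ X,
      IsClosed (Yb : Set X) ∧ IsClosed (Xb : Set X) ∧
      Yb ≤ Y ∧ Yb ≤ Xb ∧
      (∃ s : Set X, s ⊆ (Yb : Set X) ∧ Cardinal.mk s ≤ κ ∧ (Yb : Set X) ⊆ closure s) ∧
      (∀ z : X ⧸ Y, ∃ x ∈ Xb, Submodule.mkQ Y x = z) ∧
      Xb ⊓ Y = Yb := by
  classical
  obtain ⟨s, hsd, hscard⟩ := hdens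
  -- choose norm-controlled lifts for every element of the quotient
  have hlift : ∀ h : X ⧸ Y, ∃ x : X, Submodule.Quotient.mk x = h ∧ ‖x‖ ≤ 2 * ‖h‖ := by
    intro h
    rcases eq_or_ne h 0 with rfl | h0
    · exact ⟨0, by simp, by simp⟩
    · obtain ⟨x, hx1, hx2⟩ := Submodule.Quotient.norm_mk_lt h (norm_pos_iff.mpr h0)
      exact ⟨x, hx1, by linarith⟩
  choose ℓ hℓ1 hℓ2 using hlift
  set K : AddSubgroup (X ⧸ Y) := AddSubgroup.closure s with hK
  set S : Set X := ℓ '' (K : Set (X ⧸ Y)) with hS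
  set V : Submodule ℝ X := Submodule.span ℝ S with hV
  set Xb : Submodule ℝ X := V.topologicalClosure with hXb
  have hXbc : IsClosed (Xb : Set X) := Submodule.isClosed_topologicalClosure V
  set Yb : Submodule ℝ X := Xb ⊓ Y with hYb
  have hKcard : Cardinal.mk K ≤ κ := (aux_mk_closure_le s).trans (max_le hscard hκ)
  have hScard : Cardinal.mk S ≤ κ := le_trans Cardinal.mk_image_le hKcard
  -- surjectivity
  haveI : CompleteSpace ↥Xb := hXbc.completeSpace_coe
  set f : NormedAddGroupHom ↥Xb (X ⧸ Y) :=
    { toFun := fun g => Submodule.Quotient.mk (g : X)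
      map_add' := fun a b => by simp
      bound' := ⟨1, fun g => by
        simpa [one_mul] using Submodule.Quotient.norm_mk_le (S := Y) (g : X)⟩ } with hf
  have hsurjK : f.SurjectiveOnWith K 2 := by
    intro h hh
    have hmem : ℓ h ∈ Xb :=
      Submodule.le_topologicalClosure V (Submodule.subset_span ⟨h, hh, rfl⟩)
    exact ⟨⟨ℓ h, hmem⟩, hℓ1 h, by simpa using hℓ2 h⟩
  have hsurj : f.SurjectiveOnWith K.topologicalClosure (2 + 1) :=
    controlled_closure_of_complete (by norm_num) (by norm_num) hsurjK
  have hKdense : Dense (K : Set (X ⧸ Y)) := hsd.mono AddSubgroup.subset_closure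
  have hsurj' : ∀ z : X ⧸ Y, ∃ x ∈ Xb, Submodule.mkQ Y x = z := by
    intro z
    have hz : z ∈ K.topologicalClosure := by
      have := hKdense z
      exact this
    obtain ⟨g, hg, -⟩ := hsurj z hz
    exact ⟨(g : X), g.2, by rw [← hg]; rfl⟩
  -- dense subset of Yb
  set QS : Set X := Set.range (fun p : ℚ × S => (p.1 : ℝ) • (p.2 : X)) with hQSdef
  set G : AddSubgroup X := AddSubgroup.closure QS with hGdef
  have hQScard : Cardinal.mk QS ≤ κ := by
    refine le_trans Cardinal.mk_range_le ?_
    have : Cardinal.mk (ℚ × S) = Cardinal.aleph0 * Cardinal.mk S := by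
      rw [Cardinal.mk_prod, Cardinal.lift_id, Cardinal.lift_id, Cardinal.mkRat]
    rw [this]
    calc Cardinal.aleph0 * Cardinal.mk S ≤ κ * κ := mul_le_mul' hκ hScard
      _ = κ := Cardinal.mul_eq_self hκ
  have hGcard : Cardinal.mk G ≤ κ := (aux_mk_closure_le QS).trans (max_le hQScard hκ)
  have hXbsub : (Xb : Set X) ⊆ closure (G : Set X) := by
    have h1 := aux_span_sub_closure S
    have h2 : (Xb : Set X) = closure (V : Set X) := by
      rw [hXb, Submodule.topologicalClosure_coe]
    rw [h2]
    calc closure (V : Set X) ⊆ closure (closure (G : Set X)) := closure_mono h1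
      _ = closure (G : Set X) := closure_closure
  have hYbsub : (Yb : Set X) ⊆ closure (G : Set X) := by
    intro x hx
    exact hXbsub (by exact hx.1)
  obtain ⟨u, hu1, hu2, hu3⟩ := aux_dense_subset hκ (G : Set X) (Yb : Set X) hYbsub hGcard
  refine ⟨Yb, Xb, ?_, hXbc, inf_le_right, inf_le_left, ⟨u, hu1, hu2, hu3⟩, hsurj', rfl⟩
  have : (Yb : Set X) = (Xb : Set X) ∩ (Y : Set X) := Submodule.coe_inf
  rw [this]
  exact hXbc.inter hYc
end
end

section
/- Let 0 → A →i B →p C → 0 and 0 → E →j X →q C → 0 be short exact sequences of real Banach spaces with the same quotient space C. Suppose that every short exact sequence of Banach spaces of the form 0 → E → W → B → 0 splits. Then there exist bounded linear operators φ : A → E and Φ : B → X such that Φ∘i = j∘φ and q∘Φ = p. -/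
open ZeroAtInfty Set

set_option maxHeartbeats 1600000
set_option synthInstance.maxHeartbeats 800000

noncomputable section

/-- `(i, q)` forms a short exact sequence `0 → Y → X → Z → 0` of real normed spaces:
`i` is injective with closed range, `q` is surjective, and `ker q = range i`. -/
structure IsShortExactSeq {Y X Z : Type} [NormedAddCommGroup Y] [NormedSpace ℝ Y]
    [NormedAddCommGroup X] [NormedSpace ℝ X] [NormedAddCommGroup Z] [NormedSpace ℝ Z]
    (i : Y →L[ℝ] X) (q : X →L[ℝ] Z) : Prop where
  inj : Function.Injective i
  closedRange : IsClosed (Set.range i)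
  surj : Function.Surjective q
  exact : ∀ x, q x = 0 ↔ x ∈ Set.range i

/-- The sequence `0 → Y → X → Z → 0` splits: the range of `i` is complemented in `X`,
i.e. it is the range of a bounded linear (idempotent) projection of `X`. -/
def Splits {Y X : Type} [NormedAddCommGroup Y] [NormedSpace ℝ Y]
    [NormedAddCommGroup X] [NormedSpace ℝ X] (i : Y →L[ℝ] X) : Prop :=
  ∃ P : X →L[ℝ] X, (∀ x, P (P x) = P x) ∧ Set.range P = Set.range i

/-- `Ext(Z, Y) ≠ 0` : there exists a short exact sequence `0 → Y → E → Z → 0` of real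
Banach spaces that does not split. -/
def ExtNonzero (Z Y : Type) [NormedAddCommGroup Y] [NormedSpace ℝ Y]
    [NormedAddCommGroup Z] [NormedSpace ℝ Z] : Prop :=
  ∃ (E : Type) (_ : NormedAddCommGroup E) (_ : NormedSpace ℝ E) (_ : CompleteSpace E)
    (i : Y →L[ℝ] E) (q : E →L[ℝ] Z), IsShortExactSeq i q ∧ ¬ Splits i

/-- Given exact sequences `0 → A →i B →p C → 0` and `0 → E →j X →q C → 0`, if
`Ext(B, E) = 0` (every exact sequence `0 → E → W → B → 0` splits), then there are
operators `φ : A → E` and `Φ : B → X` with `Φ ∘ i = j ∘ φ` and `q ∘ Φ = p`. -/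
theorem statement8
    (A B C E X : Type)
    [NormedAddCommGroup A] [NormedSpace ℝ A] [CompleteSpace A]
    [NormedAddCommGroup B] [NormedSpace ℝ B] [CompleteSpace B]
    [NormedAddCommGroup C] [NormedSpace ℝ C] [CompleteSpace C]
    [NormedAddCommGroup E] [NormedSpace ℝ E] [CompleteSpace E]
    [NormedAddCommGroup X] [NormedSpace ℝ X] [CompleteSpace X]
    (i : A →L[ℝ] B) (p : B →L[ℝ] C) (h₁ : IsShortExactSeq i p)
    (j : E →L[ℝ] X) (q : X →L[ℝ] C) (h₂ : IsShortExactSeq j q)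
    (hext : ∀ (W : Type) [NormedAddCommGroup W] [NormedSpace ℝ W] [CompleteSpace W]
      (j' : E →L[ℝ] W) (p' : W →L[ℝ] B), IsShortExactSeq j' p' → Splits j') :
    ∃ (φ : A →L[ℝ] E) (Φ : B →L[ℝ] X),
      (∀ a, Φ (i a) = j (φ a)) ∧ (∀ b, q (Φ b) = p b) := by
  classical
  -- the map defining the pullback
  set g : (B × X) →L[ℝ] C :=
    p.comp (ContinuousLinearMap.fst ℝ B X) - q.comp (ContinuousLinearMap.snd ℝ B X) with hg
  set W := LinearMap.ker (g : B × X →ₗ[ℝ] C) with hW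
  haveI : CompleteSpace W := (ContinuousLinearMap.isClosed_ker g).completeSpace_coe
  have hmemW : ∀ bx : B × X, bx ∈ W ↔ p bx.1 = q bx.2 := by
    intro bx
    simp [hW, hg, LinearMap.mem_ker, sub_eq_zero]
  have hmem : ∀ e : E, ((0 : B), j e) ∈ W := by
    intro e
    rw [hmemW]
    have : q (j e) = 0 := (h₂.exact (j e)).mpr ⟨e, rfl⟩
    simp [this]
  set j' : E →L[ℝ] W := ((0 : E →L[ℝ] B).prod j).codRestrict W hmem with hj'
  set p' : W →L[ℝ] B := (ContinuousLinearMap.fst ℝ B X).comp W.subtypeL with hp'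
  have hj'val : ∀ e : E, (j' e : B × X) = ((0 : B), j e) := fun e => rfl
  have hp'val : ∀ w : W, p' w = (w : B × X).1 := fun w => rfl
  have hker : ∀ w : W, p' w = 0 ↔ w ∈ Set.range j' := by
    intro w
    constructor
    · intro hw
      have h1 : (w : B × X).1 = 0 := hw
      have h2 : q (w : B × X).2 = 0 := by
        have := (hmemW (w : B × X)).mp w.2
        rw [h1] at this; simpa using this.symm
      obtain ⟨e, he⟩ := (h₂.exact _).mp h2
      refine ⟨e, ?_⟩
      apply Subtype.ext
      rw [hj'val]
      exact Prod.ext h1.symm he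
    · rintro ⟨e, rfl⟩
      rw [hp'val, hj'val]
  have hses : IsShortExactSeq j' p' := by
    constructor
    · intro e₁ e₂ h
      have := congrArg (fun w : W => (w : B × X).2) h
      simp only [hj'val] at this
      exact h₂.inj this
    · have : Set.range j' = (⇑p') ⁻¹' {0} := by
        ext w; simp [Set.mem_preimage, ← hker w]
      rw [this]
      exact (isClosed_singleton).preimage p'.continuous
    · intro b
      obtain ⟨x, hx⟩ := h₂.surj (p b)
      exact ⟨⟨(b, x), (hmemW _).mpr hx.symm⟩, rfl⟩
    · exact hker
  obtain ⟨P, hPP, hrangeP⟩ := hext W j' p' hses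
  -- the complement of range j' in W
  set K := LinearMap.ker (P : W →ₗ[ℝ] W) with hK
  haveI : CompleteSpace K := (ContinuousLinearMap.isClosed_ker P).completeSpace_coe
  set p'' : K →L[ℝ] B := p'.comp K.subtypeL with hp''
  have hp''inj : Function.Injective p'' := by
    intro w₁ w₂ h
    have hsub : p' ((w₁ : W) - (w₂ : W)) = 0 := by
      rw [map_sub, sub_eq_zero]; exact h
    obtain ⟨e, he⟩ := (hker _).mp hsub
    have hmemP : (w₁ : W) - (w₂ : W) ∈ Set.range P := by
      rw [hrangeP]; exact ⟨e, he⟩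
    obtain ⟨w, hw⟩ := hmemP
    have h1 : P ((w₁ : W) - (w₂ : W)) = (w₁ : W) - (w₂ : W) := by
      rw [← hw, hPP]
    have h2 : P ((w₁ : W) - (w₂ : W)) = 0 := by
      rw [map_sub, show P w₁ = 0 from w₁.2, show P w₂ = 0 from w₂.2, sub_zero]
    have : (w₁ : W) = (w₂ : W) := by
      have := h1.symm.trans h2
      rwa [sub_eq_zero] at this
    exact Subtype.ext this
  have hp''surj : Function.Surjective p'' := by
    intro b
    obtain ⟨w, hw⟩ := hses.surj b
    refine ⟨⟨w - P w, ?_⟩, ?_⟩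
    · simp only [LinearMap.mem_ker, hK]
      rw [map_sub, ContinuousLinearMap.coe_coe, hPP, sub_self]
    · have hPw : p' (P w) = 0 := by
        have : P w ∈ Set.range j' := by rw [← hrangeP]; exact ⟨w, rfl⟩
        exact (hker _).mpr this
      show p' (w - P w) = b
      rw [map_sub, hPw, sub_zero, hw]
  -- p'' is a continuous linear equivalence
  set eK : K ≃L[ℝ] B := ContinuousLinearEquiv.ofBijective p''
    (LinearMap.ker_eq_bot.mpr hp''inj) (LinearMap.range_eq_top.mpr hp''surj) with heK
  have heKapp : ∀ k : K, eK k = p'' k := fun k =>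
    congrFun (ContinuousLinearEquiv.coeFn_ofBijective p'' _ _) k
  set Φ : B →L[ℝ] X := (ContinuousLinearMap.snd ℝ B X).comp
    (W.subtypeL.comp (K.subtypeL.comp (eK.symm : B →L[ℝ] K))) with hΦ
  have hΦval : ∀ b : B, Φ b = ((((eK.symm b : K) : W) : B × X)).2 := fun b => rfl
  have hΦq : ∀ b : B, q (Φ b) = p b := by
    intro b
    have h1 : p' ((eK.symm b : K) : W) = b := by
      have := eK.apply_symm_apply b
      rw [heKapp] at this
      exact this
    have h2 := (hmemW (((eK.symm b : K) : W) : B × X)).mp ((eK.symm b : K) : W).2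
    rw [hΦval, ← h2]
    exact congrArg p h1
  -- now construct φ
  set R := LinearMap.range (j : E →ₗ[ℝ] X) with hR
  haveI : CompleteSpace R := by
    refine IsClosed.completeSpace_coe (hs := ?_)
    have : (R : Set X) = Set.range j := by
      ext x; simp [hR, LinearMap.mem_range]
    rw [this]; exact h₂.closedRange
  set jr : E →L[ℝ] R := j.codRestrict R (fun e => LinearMap.mem_range_self _ e) with hjr
  have hjrinj : Function.Injective jr := by
    intro e₁ e₂ h
    exact h₂.inj (congrArg Subtype.val h)
  have hjrsurj : Function.Surjective jr := by
    rintro ⟨x, hx⟩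
    obtain ⟨e, he⟩ := hx
    exact ⟨e, Subtype.ext he⟩
  set eJ : E ≃L[ℝ] R := ContinuousLinearEquiv.ofBijective jr
    (LinearMap.ker_eq_bot.mpr hjrinj) (LinearMap.range_eq_top.mpr hjrsurj) with heJ
  have heJapp : ∀ e : E, (eJ e : X) = j e := fun e =>
    congrArg Subtype.val (congrFun (ContinuousLinearEquiv.coeFn_ofBijective jr _ _) e)
  have hΦi : ∀ a : A, Φ (i a) ∈ R := by
    intro a
    have hp0 : p (i a) = 0 := (h₁.exact (i a)).mpr ⟨a, rfl⟩
    have hq0 : q (Φ (i a)) = 0 := by rw [hΦq, hp0]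
    obtain ⟨e, he⟩ := (h₂.exact _).mp hq0
    exact ⟨e, he⟩
  set ψ : A →L[ℝ] R := (Φ.comp i).codRestrict R hΦi with hψ
  set φ : A →L[ℝ] E := (eJ.symm : R →L[ℝ] E).comp ψ with hφ
  refine ⟨φ, Φ, ?_, hΦq⟩
  intro a
  have : j (φ a) = (eJ (eJ.symm (ψ a)) : X) := by
    rw [← heJapp]; rfl
  rw [this, eJ.apply_symm_apply]
  rfl
end
end
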